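/- For every compact metric space Y and every integer n ≥ 0, the family C_n(Y) of all compacta in Y of covering dimension ≥ n that are C-spaces is a coanalytic subset of 2^Y, and C_n(Y) ∩ C(Y) is a coanalytic subset of C(Y). -/

import Mathlib

open Topology TopologicalSpace Metric Set Filter

/-- The Hilbert cube `[0,1]^ℕ` (with the product topology). -/
abbrev HCube : Type := ℕ → unitInterval

/-- The hyperspace `2^X` of nonempty compact subsets of `X`, with the Hausdorff metric. -/
abbrev Hyper (X : Type) [MetricSpace X] : Type := TopologicalSpace.NonemptyCompacts X

/-- The hyperspace `C(X)` of subcontinua (nonempty compact connected subsets) of `X`. -/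
abbrev Subcontinua (X : Type) [MetricSpace X] : Type :=
  {K : TopologicalSpace.NonemptyCompacts X // IsConnected (K : Set X)}

/-- A set is `F_σ` if it is a countable union of closed sets. -/
def IsFsigma {Z : Type} [TopologicalSpace Z] (A : Set Z) : Prop :=
  ∃ F : ℕ → Set Z, (∀ n, IsClosed (F n)) ∧ A = ⋃ n, F n

/-- A set is `F_{σδ}` if it is a countable intersection of `F_σ` sets. -/
def IsFsigmaDelta {Z : Type} [TopologicalSpace Z] (A : Set Z) : Prop :=
  ∃ F : ℕ → Set Z, (∀ n, IsFsigma (F n)) ∧ A = ⋂ n, F n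

/-- A set is in the class `D_2(F_σ)` if it is a difference of two `F_σ` sets. -/
def IsD2Fsigma {Z : Type} [TopologicalSpace Z] (A : Set Z) : Prop :=
  ∃ F G : Set Z, IsFsigma F ∧ IsFsigma G ∧ A = F \ G

/-- A set is coanalytic (`Π^1_1`) if its complement is analytic. -/
def IsCoanalytic {Z : Type} [TopologicalSpace Z] (A : Set Z) : Prop :=
  MeasureTheory.AnalyticSet Aᶜ

/-- A subset `S` of a space has finitely many connected components (as a subspace). -/
def FinitelyManyComponents {Z : Type} [TopologicalSpace Z] (S : Set Z) : Prop :=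
  {C : Set Z | ∃ x ∈ S, C = connectedComponentIn S x}.Finite

/-- A metric continuum is aposyndetic (equivalently, semi-locally connected) iff for every
`ε > 0` every point has an open neighborhood `U` of diameter `< ε` whose complement has
finitely many connected components. -/
def Aposyndetic (Z : Type) [MetricSpace Z] : Prop :=
  ∀ ε : ℝ, 0 < ε → ∀ z : Z, ∃ U : Set Z, IsOpen U ∧ z ∈ U ∧ Metric.diam U < ε ∧
    FinitelyManyComponents Uᶜ

/-- A metric continuum is colocally connected iff every point has arbitrarily small
open neighborhoods with connected complement. -/
def ColocallyConnected (Z : Type) [MetricSpace Z] : Prop :=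
  ∀ ε : ℝ, 0 < ε → ∀ z : Z, ∃ U : Set Z, IsOpen U ∧ z ∈ U ∧ Metric.diam U < ε ∧
    IsPreconnected (Uᶜ : Set Z)

/-- The family `Apo(Y)` of nondegenerate aposyndetic subcontinua of `Y`, in `C(Y)`. -/
def Apo (Y : Type) [MetricSpace Y] : Set (Subcontinua Y) :=
  {K | (K.1 : Set Y).Nontrivial ∧ Aposyndetic (K.1 : Set Y)}

/-- The family `Col(Y)` of nondegenerate colocally connected subcontinua of `Y`, in `C(Y)`. -/
def Col (Y : Type) [MetricSpace Y] : Set (Subcontinua Y) :=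
  {K | (K.1 : Set Y).Nontrivial ∧ ColocallyConnected (K.1 : Set Y)}

/-- A metric continuum `Z` is a Kelley continuum. -/
def KelleyContinuum (Z : Type) [MetricSpace Z] : Prop :=
  ∀ (z : Z) (zs : ℕ → Z), Tendsto zs atTop (nhds z) →
    ∀ W : Set Z, IsCompact W → IsConnected W → z ∈ W →
      ∃ Ws : ℕ → Set Z, (∀ n, IsCompact (Ws n) ∧ IsConnected (Ws n) ∧ zs n ∈ Ws n) ∧
        Tendsto (fun n => Metric.hausdorffDist (Ws n) W) atTop (nhds 0)

/-- The family `K(X)` of Kelley subcontinua of `X`, in `C(X)`. -/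
def KelleyFam (X : Type) [MetricSpace X] : Set (Subcontinua X) :=
  {K | KelleyContinuum (K.1 : Set X)}

/-- The family `LC(X)` of locally connected subcontinua of `X`, in `C(X)`. -/
def LCFam (X : Type) [MetricSpace X] : Set (Subcontinua X) :=
  {K | LocallyConnectedSpace (K.1 : Set X)}

/-- A subset `K` of `X` is a decomposable continuum if it is a union of two proper
subcontinua. -/
def DecomposableSet {X : Type} [TopologicalSpace X] (K : Set X) : Prop :=
  ∃ A B : Set X, IsCompact A ∧ IsConnected A ∧ IsCompact B ∧ IsConnected B ∧
    A ∪ B = K ∧ A ≠ K ∧ B ≠ K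

/-- The family `D(X)` of decomposable subcontinua of `X`, in `C(X)`. -/
def DecompFam (X : Type) [MetricSpace X] : Set (Subcontinua X) :=
  {K | DecomposableSet (K.1 : Set X)}

/-- Covering dimension at most `n`: every finite open cover has a finite open refinement
which still covers and in which every point belongs to at most `n + 1` members. -/
def CovDimLE (Z : Type) [TopologicalSpace Z] (n : ℕ) : Prop :=
  ∀ 𝒰 : Finset (Set Z), (∀ U ∈ 𝒰, IsOpen U) → ⋃₀ (𝒰 : Set (Set Z)) = Set.univ →
    ∃ 𝒱 : Finset (Set Z), (∀ V ∈ 𝒱, IsOpen V) ∧ ⋃₀ (𝒱 : Set (Set Z)) = Set.univ ∧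
      (∀ V ∈ 𝒱, ∃ U ∈ 𝒰, V ⊆ U) ∧
      ∀ z : Z, {V ∈ (𝒱 : Set (Set Z)) | z ∈ V}.ncard ≤ n + 1

/-- Covering dimension at least `n`. -/
def CovDimGE (Z : Type) [TopologicalSpace Z] (n : ℕ) : Prop :=
  ∀ m : ℕ, m + 1 ≤ n → ¬ CovDimLE Z m

/-- The family `D_n(X) ∩ C(X)` of subcontinua of covering dimension `≥ n`. -/
def DimGEFam (X : Type) [MetricSpace X] (n : ℕ) : Set (Subcontinua X) :=
  {K | CovDimGE (K.1 : Set X) n}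

/-- A closed subset `C` of a space `X` is a closed separator of `X`:
`X \ C` is a union of two disjoint nonempty open subsets of `X`. -/
def IsClosedSeparator {X : Type} [TopologicalSpace X] (C : Set X) : Prop :=
  IsClosed C ∧ ∃ U V : Set X, IsOpen U ∧ IsOpen V ∧ U.Nonempty ∧ V.Nonempty ∧
    Disjoint U V ∧ Cᶜ = U ∪ V

/-- The family `S(X)` of closed separators of `X`, viewed in the hyperspace `2^X`. -/
def SepFam (X : Type) [MetricSpace X] : Set (Hyper X) :=
  {K | IsClosedSeparator (K : Set X)}

/-- The family `S(X) ∩ C(X)` of subcontinua of `X` separating `X`, in `C(X)`. -/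
def SepSubcontFam (X : Type) [MetricSpace X] : Set (Subcontinua X) :=
  {K | IsClosedSeparator (K.1 : Set X)}

/-- The family `N(X)` of (nonempty compact) nowhere dense subsets of `X`, in `2^X`. -/
def NwdFam (X : Type) [MetricSpace X] : Set (Hyper X) :=
  {K | IsNowhereDense (K : Set X)}

/-- The family of nowhere dense subcontinua of `X`, in `C(X)`. -/
def NwdSubcontFam (X : Type) [MetricSpace X] : Set (Subcontinua X) :=
  {K | IsNowhereDense (K.1 : Set X)}

/-- A closed set `B` in a metric space `Q` (thought of as a Hilbert cube) is a `Z`-set: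
the identity can be approximated arbitrarily closely by maps missing `B`. -/
def IsZSet {Q : Type} [MetricSpace Q] (B : Set Q) : Prop :=
  IsClosed B ∧ ∀ ε : ℝ, 0 < ε → ∃ f : Q → Q, Continuous f ∧
    (∀ x : Q, f x ∉ B) ∧ ∀ x : Q, dist (f x) x < ε

/-- A `σZ`-set is a countable union of `Z`-sets. -/
def IsSigmaZSet {Q : Type} [MetricSpace Q] (B : Set Q) : Prop :=
  ∃ F : ℕ → Set Q, (∀ n, IsZSet (F n)) ∧ B = ⋃ n, F n

/-- `A ⊆ Q` is `M`-universal for the class `Cl` of subsets of the Hilbert cube: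
every `M₀ ⊆ [0,1]^ℕ` in the class is reduced to `A` by some embedding of the
Hilbert cube into `Q`. -/
def UniversalFor {Q : Type} [MetricSpace Q] (Cl : Set HCube → Prop) (A : Set Q) : Prop :=
  ∀ M : Set HCube, Cl M → ∃ f : HCube → Q, IsEmbedding f ∧ f ⁻¹' A = M

/-- `A ⊆ Q` is strongly `M`-universal for the class `Cl` of subsets of the Hilbert cube. -/
def StronglyUniversalFor {Q : Type} [MetricSpace Q] (Cl : Set HCube → Prop)
    (A : Set Q) : Prop :=
  ∀ M : Set HCube, Cl M → ∀ K : Set HCube, IsCompact K →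
    ∀ f : HCube → Q, IsEmbedding f → IsZSet (f '' K) →
      ∀ ε : ℝ, 0 < ε → ∃ g : HCube → Q, IsEmbedding g ∧
        IsZSet (Set.range g) ∧ (∀ x ∈ K, g x = f x) ∧
        g ⁻¹' A \ K = M \ K ∧ ∀ x : HCube, dist (g x) (f x) < ε

/-- `A ⊆ Q` is an absorber for the class given by `ClH` (on the Hilbert cube) and
`ClQ` (on `Q`): it belongs to the class, is contained in a `σZ`-set, and is
strongly universal for the class. -/
def IsAbsorberFor {Q : Type} [MetricSpace Q] (ClH : Set HCube → Prop)
    (ClQ : Set Q → Prop) (A : Set Q) : Prop :=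
  ClQ A ∧ (∃ B : Set Q, IsSigmaZSet B ∧ A ⊆ B) ∧ StronglyUniversalFor ClH A

/-- `C` is a closed separator of the space `Z` between `A` and `B`. -/
def SeparatesBetween {Z : Type} [TopologicalSpace Z] (C A B : Set Z) : Prop :=
  IsClosed C ∧ ∃ U V : Set Z, IsOpen U ∧ IsOpen V ∧ A ⊆ U ∧ B ⊆ V ∧
    Disjoint U V ∧ Cᶜ = U ∪ V

/-- A compact metric space is strongly infinite-dimensional if it has an essential
sequence of pairs of disjoint closed sets. -/
def StronglyInfiniteDimensional (Z : Type) [TopologicalSpace Z] : Prop :=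
  ∃ A B : ℕ → Set Z, (∀ n, IsClosed (A n) ∧ IsClosed (B n) ∧ Disjoint (A n) (B n)) ∧
    ∀ C : ℕ → Set Z, (∀ n, SeparatesBetween (C n) (A n) (B n)) → (⋂ n, C n).Nonempty

/-- The family `W_n(Y)` of weakly infinite-dimensional compacta in `Y` of covering
dimension `≥ n`, in `2^Y`. -/
def WFam (Y : Type) [MetricSpace Y] (n : ℕ) : Set (Hyper Y) :=
  {K | ¬ StronglyInfiniteDimensional (K : Set Y) ∧ CovDimGE (K : Set Y) n}

/-- A compact metric space is a `C`-space. -/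
def IsCSpace (Z : Type) [MetricSpace Z] : Prop :=
  ∀ ε : ℕ → ℝ, (∀ i, 0 < ε i) →
    ∃ (k : ℕ) (V : Fin k → Set (Set Z)),
      (∀ i : Fin k, (V i).Finite ∧ (∀ v ∈ V i, IsOpen v ∧ Metric.diam v < ε i.1) ∧
        (V i).Pairwise Disjoint) ∧
      (⋃ i : Fin k, ⋃₀ V i) = Set.univ

/-- The family `C_n(Y)` of compacta in `Y` of covering dimension `≥ n` which are
`C`-spaces, in `2^Y`. -/
def CFam (Y : Type) [MetricSpace Y] (n : ℕ) : Set (Hyper Y) :=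
  {K | IsCSpace (K : Set Y) ∧ CovDimGE (K : Set Y) n}

/-- A space is strongly countable-dimensional if it is a countable union of closed
finite-dimensional subspaces. -/
def StronglyCountableDimensional (Z : Type) [TopologicalSpace Z] : Prop :=
  ∃ F : ℕ → Set Z, (∀ k, IsClosed (F k) ∧ ∃ m : ℕ, CovDimLE (F k) m) ∧ (⋃ k, F k) = Set.univ

/-- The family `SCD_n(Y)` of strongly countable-dimensional compacta in `Y` of
covering dimension `≥ n`, in `2^Y`. -/
def SCDFam (Y : Type) [MetricSpace Y] (n : ℕ) : Set (Hyper Y) :=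
  {K | StronglyCountableDimensional (K : Set Y) ∧ CovDimGE (K : Set Y) n}

/-- A compact metric space is hereditarily infinite-dimensional if it is
infinite-dimensional and each nonempty closed subspace is infinite-dimensional or
zero-dimensional. -/
def HereditarilyInfiniteDimensional (Z : Type) [TopologicalSpace Z] : Prop :=
  (∀ m : ℕ, ¬ CovDimLE Z m) ∧
  ∀ F : Set Z, IsClosed F → F.Nonempty → (∀ m : ℕ, ¬ CovDimLE F m) ∨ CovDimLE F 0

/-- `A` is `Π^1_1`-hard: every coanalytic subset of every zero-dimensional Polish space
continuously reduces to `A`. -/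
def Pi11Hard {Z : Type} [TopologicalSpace Z] (A : Set Z) : Prop :=
  ∀ (Y₀ : Type) (_ : TopologicalSpace Y₀), PolishSpace Y₀ →
    TopologicalSpace.IsTopologicalBasis {s : Set Y₀ | IsClopen s} →
    ∀ C : Set Y₀, IsCoanalytic C → ∃ ξ : Y₀ → Z, Continuous ξ ∧ ξ ⁻¹' A = C

/-- `A` is `Π^1_1`-complete: coanalytic and `Π^1_1`-hard. -/
def Pi11Complete {Z : Type} [TopologicalSpace Z] (A : Set Z) : Prop :=
  IsCoanalytic A ∧ Pi11Hard A

set_option linter.unusedSectionVars false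



section Helpers
variable {Y : Type} [MetricSpace Y] [CompactSpace Y]

lemma aux_exists_pos_forall_of_finite {ι : Type*} [Finite ι] (p : ι → ℝ → Prop)
    (mono : ∀ i δ δ', 0 < δ → δ ≤ δ' → p i δ' → p i δ)
    (h : ∀ i, ∃ δ, 0 < δ ∧ p i δ) : ∃ δ, 0 < δ ∧ ∀ i, p i δ := by
  cases isEmpty_or_nonempty ι with
  | inl hi => exact ⟨1, one_pos, fun i => (hi.false i).elim⟩
  | inr hi =>
    choose d hd hp using h
    haveI := Fintype.ofFinite ι
    have hpos : 0 < Finset.univ.inf' Finset.univ_nonempty d := by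
      rw [Finset.lt_inf'_iff]
      exact fun i _ => hd i
    exact ⟨_, hpos, fun i => mono i _ (d i) hpos (Finset.inf'_le _ (Finset.mem_univ i)) (hp i)⟩

lemma aux_exists_thickening_iInter_empty {ι : Type*} [Nonempty ι] (C : ι → Set Y)
    (hC : ∀ i, IsClosed (C i)) (h : (⋂ i, C i) = ∅) :
    ∃ δ, 0 < δ ∧ (⋂ i, Metric.thickening δ (C i)) = ∅ := by
  have cover : (univ : Set Y) ⊆ ⋃ i, (C i)ᶜ := by
    intro x _
    by_contra hx
    simp only [mem_iUnion, mem_compl_iff, not_exists, not_not] at hx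
    exact (eq_empty_iff_forall_notMem.1 h x) (mem_iInter.2 hx)
  obtain ⟨δ, hδ, H⟩ := lebesgue_number_lemma_of_metric isCompact_univ
    (fun i => (hC i).isOpen_compl) cover
  refine ⟨δ, hδ, eq_empty_iff_forall_notMem.2 fun x hx => ?_⟩
  obtain ⟨i, hi⟩ := H x trivial
  obtain ⟨z, hz, hzd⟩ := mem_thickening_iff.1 (mem_iInter.1 hx i)
  exact hi (mem_ball.2 (by rwa [dist_comm] at hzd)) hz

lemma aux_subset_thickening_of_dist_lt {K K' : Hyper Y} {δ : ℝ} (h : dist K' K < δ) :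
    (K' : Set Y) ⊆ thickening δ (K : Set Y) := by
  intro x hx
  have hne : EMetric.hausdorffEdist (K' : Set Y) (K : Set Y) ≠ ⊤ :=
    Metric.hausdorffEdist_ne_top_of_nonempty_of_bounded K'.nonempty K.nonempty
      K'.isCompact.isBounded K.isCompact.isBounded
  rw [NonemptyCompacts.dist_eq] at h
  obtain ⟨y, hy, hd⟩ := exists_dist_lt_of_hausdorffDist_lt hx h hne
  exact mem_thickening_iff.2 ⟨y, hy, hd⟩

lemma aux_exists_near_of_dist_lt {K K' : Hyper Y} {δ : ℝ} (h : dist K' K < δ) {y : Y}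
    (hy : y ∈ (K : Set Y)) : ∃ x ∈ (K' : Set Y), dist x y < δ := by
  have hne : EMetric.hausdorffEdist (K' : Set Y) (K : Set Y) ≠ ⊤ :=
    Metric.hausdorffEdist_ne_top_of_nonempty_of_bounded K'.nonempty K.nonempty
      K'.isCompact.isBounded K.isCompact.isBounded
  rw [NonemptyCompacts.dist_eq] at h
  exact exists_dist_lt_of_hausdorffDist_lt' hy h hne

lemma aux_isBounded (s : Set Y) : Bornology.IsBounded s :=
  isCompact_univ.isBounded.subset (subset_univ s)

lemma aux_diam_val_preimage_le {S : Set Y} (O : Set Y) :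
    Metric.diam (Subtype.val ⁻¹' O : Set S) ≤ Metric.diam O := by
  rw [← isometry_subtype_coe.diam_image]
  exact Metric.diam_mono (image_preimage_subset _ _) (aux_isBounded O)

lemma aux_diam_val_image {S : Set Y} (v : Set S) :
    Metric.diam (Subtype.val '' v : Set Y) = Metric.diam v :=
  isometry_subtype_coe.diam_image v

end Helpers

section Good
variable {Y : Type} [MetricSpace Y] [CompactSpace Y]

/-- The "good cover" clause of `IsCSpace` for a fixed `ε` and `k`. -/
def GoodAt (K : Hyper Y) (ε : ℕ → ℝ) (k : ℕ) : Prop :=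
  ∃ V : Fin k → Set (Set ↥(K : Set Y)),
    (∀ i : Fin k, (V i).Finite ∧ (∀ v ∈ V i, IsOpen v ∧ Metric.diam v < ε i.1) ∧
      (V i).Pairwise Disjoint) ∧
    (⋃ i : Fin k, ⋃₀ V i) = Set.univ

lemma isCSpace_iff_goodAt (K : Hyper Y) :
    IsCSpace ↥(K : Set Y) ↔ ∀ ε : ℕ → ℝ, (∀ i, 0 < ε i) → ∃ k, GoodAt K ε k := by
  constructor
  · intro h ε hε
    obtain ⟨k, V, h1, h2⟩ := h ε hε
    exact ⟨k, V, h1, h2⟩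
  · intro h ε hε
    obtain ⟨k, V, h1, h2⟩ := h ε hε
    exact ⟨k, V, h1, h2⟩

lemma goodAt_robust (K : Hyper Y) (ε : ℕ → ℝ) (k : ℕ) (h : GoodAt K ε k) :
    ∃ (ι : Type) (_ : Finite ι) (f : ι → Fin k) (T : ι → Set Y) (δ₀ : ℝ),
      0 < δ₀ ∧ (∀ a, IsOpen (T a)) ∧ (∀ a, Metric.diam (T a) < ε (f a).1) ∧
      (∀ a b, a ≠ b → f a = f b → Disjoint (T a) (T b)) ∧
      thickening δ₀ (K : Set Y) ⊆ ⋃ a, T a := by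
  classical
  obtain ⟨V, hV, hcover⟩ := h
  haveI : CompactSpace ↥(K : Set Y) := isCompact_iff_compactSpace.mp K.isCompact
  haveI : ∀ i, Finite (V i) := fun i => ((hV i).1).to_subtype
  let ι := (i : Fin k) × (V i)
  haveI : Finite ι := inferInstance
  let u : ι → Set ↥(K : Set Y) := fun a => a.2.1
  have uo : ∀ a, IsOpen (u a) := fun a => ((hV a.1).2.1 a.2.1 a.2.2).1
  have udiam : ∀ a, Metric.diam (u a) < ε a.1.1 := fun a => ((hV a.1).2.1 a.2.1 a.2.2).2
  have ucov : (Set.univ : Set ↥(K : Set Y)) ⊆ ⋃ a, u a := by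
    intro x _
    have : x ∈ ⋃ i : Fin k, ⋃₀ V i := hcover ▸ Set.mem_univ x
    obtain ⟨i, hi⟩ := Set.mem_iUnion.mp this
    obtain ⟨v, hv, hxv⟩ := hi
    exact Set.mem_iUnion.mpr ⟨⟨i, ⟨v, hv⟩⟩, hxv⟩
  obtain ⟨w, hwcov, hwopen, hwcl⟩ := exists_subset_iUnion_closure_subset isClosed_univ uo
    (fun x _ => Set.toFinite _) ucov
  let C : ι → Set Y := fun a => Subtype.val '' closure (w a)
  have hCcomp : ∀ a, IsCompact (C a) :=
    fun a => (isClosed_closure.isCompact).image continuous_subtype_val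
  have hCcl : ∀ a, IsClosed (C a) := fun a => (hCcomp a).isClosed
  have hCdiam : ∀ a, Metric.diam (C a) < ε a.1.1 := by
    intro a
    calc Metric.diam (C a) ≤ Metric.diam (Subtype.val '' u a : Set Y) :=
          Metric.diam_mono (Set.image_mono (hwcl a)) (aux_isBounded _)
      _ = Metric.diam (u a) := aux_diam_val_image _
      _ < ε a.1.1 := udiam a
  have hCdisj : ∀ a b, a ≠ b → a.1 = b.1 → Disjoint (C a) (C b) := by
    intro a b hab h1
    have hsub : Disjoint (u a) (u b) := by
      rcases a with ⟨i, v⟩; rcases b with ⟨i', v'⟩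
      cases h1
      have hvv' : v ≠ v' := by
        intro hc; exact hab (by cases hc; rfl)
      have hne : (v : Set ↥(K : Set Y)) ≠ (v' : Set ↥(K : Set Y)) :=
        fun hc => hvv' (Subtype.ext hc)
      exact (hV i).2.2 v.2 v'.2 hne
    have : Disjoint (closure (w a)) (closure (w b)) :=
      hsub.mono (hwcl a) (hwcl b)
    exact (Set.disjoint_image_iff Subtype.val_injective).mpr this
  -- choose δ
  have hδ : ∃ δ, 0 < δ ∧ ∀ c : ι ⊕ (ι × ι),
      (match c with
        | Sum.inl a => Metric.diam (thickening δ (C a)) < ε a.1.1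
        | Sum.inr (a, b) => a ≠ b → a.1 = b.1 →
            Disjoint (thickening δ (C a)) (thickening δ (C b))) := by
    apply aux_exists_pos_forall_of_finite
    · rintro (a | ⟨a, b⟩) δ δ' hδ hle hp
      · exact lt_of_le_of_lt
          (Metric.diam_mono (thickening_mono hle _) (aux_isBounded _)) hp
      · intro h1 h2
        exact (hp h1 h2).mono (thickening_mono hle _) (thickening_mono hle _)
    · rintro (a | ⟨a, b⟩)
      · refine ⟨(ε a.1.1 - Metric.diam (C a)) / 4, by linarith [hCdiam a, Metric.diam_nonneg (s := C a)], ?_⟩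
        have h0 : (0:ℝ) ≤ (ε a.1.1 - Metric.diam (C a)) / 4 := by
          linarith [hCdiam a, Metric.diam_nonneg (s := C a)]
        calc Metric.diam (thickening _ (C a)) ≤ Metric.diam (C a) + 2 * _ :=
              diam_thickening_le _ h0
          _ < ε a.1.1 := by linarith [hCdiam a]
      · by_cases hc : a ≠ b ∧ a.1 = b.1
        · obtain ⟨δ, hδpos, hδ⟩ := (hCdisj a b hc.1 hc.2).exists_thickenings (hCcomp a) (hCcl b)
          exact ⟨δ, hδpos, fun _ _ => hδ⟩
        · refine ⟨1, one_pos, fun h1 h2 => absurd ⟨h1, h2⟩ hc⟩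
  obtain ⟨δ, hδpos, hδ⟩ := hδ
  let T : ι → Set Y := fun a => thickening δ (C a)
  have hKsub : (K : Set Y) ⊆ ⋃ a, T a := by
    intro x hx
    obtain ⟨a, ha⟩ := Set.mem_iUnion.mp (hwcov (Set.mem_univ (⟨x, hx⟩ : ↥(K : Set Y))))
    refine Set.mem_iUnion.mpr ⟨a, self_subset_thickening hδpos _ ?_⟩
    exact ⟨⟨x, hx⟩, subset_closure ha, rfl⟩
  obtain ⟨δ₀, hδ₀pos, hδ₀⟩ := K.isCompact.exists_thickening_subset_open
    (isOpen_iUnion fun a => isOpen_thickening) hKsub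
  refine ⟨ι, inferInstance, fun a => a.1, T, δ₀, hδ₀pos, fun a => isOpen_thickening,
    fun a => hδ (Sum.inl a), fun a b h1 h2 => hδ (Sum.inr (a, b)) h1 h2, hδ₀⟩

end Good

section GoodOpen
variable {Y : Type} [MetricSpace Y] [CompactSpace Y]

lemma isOpen_goodAt (k : ℕ) :
    IsOpen {p : Hyper Y × (ℕ → ℝ) | GoodAt p.1 p.2 k} := by
  rw [isOpen_iff_mem_nhds]
  rintro ⟨K, ε⟩ hp
  obtain ⟨ι, hι, f, T, δ₀, hδ₀, hTopen, hTdiam, hTdisj, hthick⟩ := goodAt_robust K ε k hp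
  haveI := hι
  have hnhds : {q : Hyper Y × (ℕ → ℝ) | dist q.1 K < δ₀ ∧
      ∀ a : ι, Metric.diam (T a) < q.2 (f a).1} ∈ nhds (K, ε) := by
    apply IsOpen.mem_nhds
    · have h1 : IsOpen {q : Hyper Y × (ℕ → ℝ) | dist q.1 K < δ₀} :=
        isOpen_lt (Continuous.dist continuous_fst continuous_const) continuous_const
      have h2 : IsOpen {q : Hyper Y × (ℕ → ℝ) | ∀ a : ι,
          Metric.diam (T a) < q.2 (f a).1} := by
        rw [show {q : Hyper Y × (ℕ → ℝ) | ∀ a : ι, Metric.diam (T a) < q.2 (f a).1}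
            = ⋂ a : ι, {q : Hyper Y × (ℕ → ℝ) | Metric.diam (T a) < q.2 (f a).1} by
          ext q; simp]
        exact isOpen_iInter_of_finite fun a =>
          isOpen_lt continuous_const ((continuous_apply _).comp continuous_snd)
      exact (h1.inter h2).mono (by intro q hq; exact hq)
    · exact ⟨by simpa using hδ₀, hTdiam⟩
  filter_upwards [hnhds]
  rintro ⟨K', ε'⟩ ⟨hdist, hdiam⟩
  refine ⟨fun i => (fun a => (Subtype.val ⁻¹' T a : Set ↥(K' : Set Y))) '' {a : ι | f a = i},
    fun i => ⟨(Set.toFinite _).image _, ?_, ?_⟩, ?_⟩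
  · rintro v ⟨a, ha, rfl⟩
    refine ⟨(hTopen a).preimage continuous_subtype_val, ?_⟩
    calc Metric.diam (Subtype.val ⁻¹' T a : Set ↥(K' : Set Y)) ≤ Metric.diam (T a) :=
          aux_diam_val_preimage_le _
      _ < ε' (f a).1 := hdiam a
      _ = ε' i.1 := by rw [ha]
  · rintro v ⟨a, ha, rfl⟩ v' ⟨b, hb, rfl⟩ hne
    have hab : a ≠ b := by rintro rfl; exact hne rfl
    exact (hTdisj a b hab (ha.trans hb.symm)).preimage _
  · apply Set.eq_univ_of_forall
    intro x
    have hx : (x : Y) ∈ ⋃ a, T a :=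
      hthick (aux_subset_thickening_of_dist_lt hdist x.2)
    obtain ⟨a, ha⟩ := Set.mem_iUnion.mp hx
    exact Set.mem_iUnion.mpr ⟨f a, Set.mem_sUnion.mpr ⟨_, ⟨a, rfl, rfl⟩, ha⟩⟩

end GoodOpen

section Dim
variable {Y : Type} [MetricSpace Y] [CompactSpace Y]

/-- Existence of an open (in `Y`) family of mesh `< 1/(j+1)` and order `≤ m+1` covering `K`. -/
def DimWitness (m j : ℕ) (K : Hyper Y) : Prop :=
  ∃ 𝒪 : Finset (Set Y), (∀ O ∈ 𝒪, IsOpen O ∧ Metric.diam O < 1 / (j + 1)) ∧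
    (K : Set Y) ⊆ ⋃₀ (𝒪 : Set (Set Y)) ∧
    ∀ y : Y, {O ∈ (𝒪 : Set (Set Y)) | y ∈ O}.ncard ≤ m + 1

lemma isOpen_dimWitness (m j : ℕ) : IsOpen {K : Hyper Y | DimWitness m j K} := by
  rw [Metric.isOpen_iff]
  intro K hK
  obtain ⟨𝒪, h1, h2, h3⟩ := hK
  have hW : IsOpen (⋃₀ (𝒪 : Set (Set Y))) :=
    isOpen_sUnion fun O hO => (h1 O hO).1
  obtain ⟨δ, hδpos, hδ⟩ := K.isCompact.exists_thickening_subset_open hW h2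
  refine ⟨δ, hδpos, fun K' hK' => ?_⟩
  have hd : dist K' K < δ := by rwa [Metric.mem_ball] at hK'
  exact ⟨𝒪, h1, (aux_subset_thickening_of_dist_lt hd).trans hδ, h3⟩

lemma covDimLE_of_dimWitness (m : ℕ) (K : Hyper Y) (h : ∀ j, DimWitness m j K) :
    CovDimLE ↥(K : Set Y) m := by
  classical
  haveI : CompactSpace ↥(K : Set Y) := isCompact_iff_compactSpace.mp K.isCompact
  haveI : Nonempty ↥(K : Set Y) := K.nonempty.to_subtype
  intro 𝒰 hop hcov
  have hcov' : (Set.univ : Set ↥(K : Set Y)) ⊆ ⋃₀ (𝒰 : Set (Set ↥(K : Set Y))) := hcov.ge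
  obtain ⟨δ, hδpos, hleb⟩ := lebesgue_number_lemma_of_metric_sUnion isCompact_univ
    (fun U hU => hop U hU) hcov'
  obtain ⟨j, hj⟩ := exists_nat_one_div_lt hδpos
  obtain ⟨𝒪, h1, h2, h3⟩ := h j
  have hdiam : ∀ O ∈ 𝒪, Metric.diam (Subtype.val ⁻¹' O : Set ↥(K : Set Y)) < δ := by
    intro O hO
    calc Metric.diam (Subtype.val ⁻¹' O : Set ↥(K : Set Y)) ≤ Metric.diam O :=
          aux_diam_val_preimage_le O
      _ < 1 / (j + 1) := (h1 O hO).2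
      _ < δ := hj
  refine ⟨𝒪.image (fun O => (Subtype.val ⁻¹' O : Set ↥(K : Set Y))), ?_, ?_, ?_, ?_⟩
  · intro V hV
    obtain ⟨O, hO, rfl⟩ := Finset.mem_image.mp hV
    exact (h1 O hO).1.preimage continuous_subtype_val
  · apply Set.eq_univ_of_forall
    intro x
    obtain ⟨O, hO, hxO⟩ := h2 x.2
    exact ⟨_, by exact_mod_cast Finset.mem_image_of_mem (fun O => (Subtype.val ⁻¹' O : Set ↥(K : Set Y))) hO, hxO⟩
  · intro V hV
    obtain ⟨O, hO, rfl⟩ := Finset.mem_image.mp hV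
    rcases Set.eq_empty_or_nonempty (Subtype.val ⁻¹' O : Set ↥(K : Set Y)) with he | ⟨x₀, hx₀⟩
    · obtain ⟨x⟩ := ‹Nonempty ↥(K : Set Y)›
      obtain ⟨U, hU, -⟩ := hcov' (Set.mem_univ x)
      exact ⟨U, hU, by rw [he]; exact Set.empty_subset U⟩
    · obtain ⟨U, hU, hball⟩ := hleb x₀ trivial
      refine ⟨U, hU, fun y hy => hball ?_⟩
      have hdy : dist y x₀ ≤ Metric.diam (Subtype.val ⁻¹' O : Set ↥(K : Set Y)) :=
        Metric.dist_le_diam_of_mem (isCompact_univ.isBounded.subset (Set.subset_univ _)) hy hx₀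
      exact Metric.mem_ball.mpr (lt_of_le_of_lt hdy (hdiam O hO))
  · intro z
    have hsub : {V ∈ (((𝒪.image (fun O => (Subtype.val ⁻¹' O : Set ↥(K : Set Y)))) : Finset (Set ↥(K : Set Y))) :
        Set (Set ↥(K : Set Y))) | z ∈ V} ⊆
        (fun O => (Subtype.val ⁻¹' O : Set ↥(K : Set Y))) '' {O ∈ (𝒪 : Set (Set Y)) | (z : Y) ∈ O} := by
      rintro V ⟨hV, hzV⟩
      obtain ⟨O, hO, rfl⟩ := Finset.mem_image.mp (by exact_mod_cast hV)
      exact ⟨O, ⟨hO, hzV⟩, rfl⟩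
    have hfin : {O ∈ (𝒪 : Set (Set Y)) | (z : Y) ∈ O}.Finite :=
      𝒪.finite_toSet.subset (Set.sep_subset _ _)
    calc {V ∈ (((𝒪.image (fun O => (Subtype.val ⁻¹' O : Set ↥(K : Set Y)))) : Finset (Set ↥(K : Set Y))) :
          Set (Set ↥(K : Set Y))) | z ∈ V}.ncard
        ≤ ((fun O => (Subtype.val ⁻¹' O : Set ↥(K : Set Y))) ''
            {O ∈ (𝒪 : Set (Set Y)) | (z : Y) ∈ O}).ncard :=
          Set.ncard_le_ncard hsub (hfin.image _)
      _ ≤ {O ∈ (𝒪 : Set (Set Y)) | (z : Y) ∈ O}.ncard := Set.ncard_image_le hfin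
      _ ≤ m + 1 := h3 z

end Dim

section Dim2
variable {Y : Type} [MetricSpace Y] [CompactSpace Y]

lemma dimWitness_of_covDimLE (m : ℕ) (K : Hyper Y) (h : CovDimLE ↥(K : Set Y) m) (j : ℕ) :
    DimWitness m j K := by
  classical
  haveI : CompactSpace ↥(K : Set Y) := isCompact_iff_compactSpace.mp K.isCompact
  set Z := ↥(K : Set Y) with hZ
  have hrpos : (0:ℝ) < 1 / (5 * (j + 1)) := by positivity
  -- finite cover by balls of radius r
  obtain ⟨t, ht⟩ := isCompact_univ.elim_finite_subcover
    (fun x : Z => Metric.ball x (1 / (5 * (j + 1)))) (fun x => Metric.isOpen_ball)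
    (fun x _ => Set.mem_iUnion.mpr ⟨x, Metric.mem_ball_self hrpos⟩)
  have hcov : ⋃₀ ((t.image (fun x : Z => Metric.ball x (1 / (5 * (j + 1))))) :
      Set (Set Z)) = Set.univ := by
    apply Set.eq_univ_of_forall
    intro x
    obtain ⟨x₀, hx₀⟩ := Set.mem_iUnion₂.mp (ht (Set.mem_univ x))
    exact ⟨Metric.ball x₀ (1 / (5 * (j + 1))),
      by exact_mod_cast Finset.mem_image_of_mem _ hx₀.1, hx₀.2⟩
  obtain ⟨𝒱, hVop, hVcov, hVref, hVord⟩ :=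
    h (t.image (fun x : Z => Metric.ball x (1 / (5 * (j + 1)))))
      (by rintro U hU; obtain ⟨x, -, rfl⟩ := Finset.mem_image.mp hU; exact Metric.isOpen_ball)
      hcov
  have hVdiam : ∀ V ∈ 𝒱, Metric.diam (V : Set Z) ≤ 2 / (5 * (j + 1)) := by
    intro V hV
    obtain ⟨U, hU, hVU⟩ := hVref V hV
    obtain ⟨x, -, rfl⟩ := Finset.mem_image.mp hU
    calc Metric.diam V ≤ Metric.diam (Metric.ball x (1 / (5 * (j + 1)))) :=
          Metric.diam_mono hVU (isCompact_univ.isBounded.subset (Set.subset_univ _))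
      _ ≤ 2 * (1 / (5 * (j + 1))) := Metric.diam_ball hrpos.le
      _ = 2 / (5 * (j + 1)) := by ring
  -- shrink
  haveI : Finite {V : Set Z // V ∈ 𝒱} := inferInstance
  have hucov : (Set.univ : Set Z) ⊆ ⋃ V : {V : Set Z // V ∈ 𝒱}, (V : Set Z) := by
    intro x _
    obtain ⟨V, hV, hxV⟩ := hVcov.ge (Set.mem_univ x)
    exact Set.mem_iUnion.mpr ⟨⟨V, by exact_mod_cast hV⟩, hxV⟩
  obtain ⟨w, hwcov, hwopen, hwcl⟩ := exists_subset_iUnion_closure_subset isClosed_univ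
    (fun V : {V : Set Z // V ∈ 𝒱} => hVop V.1 V.2) (fun x _ => Set.toFinite _) hucov
  let C : {V : Set Z // V ∈ 𝒱} → Set Y := fun a => Subtype.val '' closure (w a)
  have hCcl : ∀ a, IsClosed (C a) :=
    fun a => ((isClosed_closure.isCompact).image continuous_subtype_val).isClosed
  have hCdiam : ∀ a, Metric.diam (C a) ≤ 2 / (5 * (j + 1)) := by
    intro a
    calc Metric.diam (C a) ≤ Metric.diam (Subtype.val '' (a.1 : Set Z) : Set Y) :=
          Metric.diam_mono (Set.image_mono (hwcl a)) (aux_isBounded _)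
      _ = Metric.diam (a.1 : Set Z) := aux_diam_val_image _
      _ ≤ 2 / (5 * (j + 1)) := hVdiam a.1 a.2
  -- intersections of m+2 distinct members are empty
  have hIempty : ∀ g : Fin (m + 2) → {V : Set Z // V ∈ 𝒱},
      Function.Injective g → (⋂ a, C (g a)) = ∅ := by
    intro g hg
    rw [Set.eq_empty_iff_forall_notMem]
    intro y hy
    obtain ⟨z, hz0, hz0y⟩ := Set.mem_iInter.mp hy 0
    have hzall : ∀ a, z ∈ (g a).1 := by
      intro a
      obtain ⟨z', hz', hz'y⟩ := Set.mem_iInter.mp hy a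
      have : z' = z := Subtype.val_injective (hz'y.trans hz0y.symm)
      exact hwcl (g a) (this ▸ hz')
    have hrange : Set.range (fun a => (g a).1) ⊆ {V ∈ (𝒱 : Set (Set Z)) | z ∈ V} := by
      rintro V ⟨a, rfl⟩
      exact ⟨(g a).2, hzall a⟩
    have hginj : Function.Injective (fun a => (g a).1) :=
      fun a b hab => hg (Subtype.ext hab)
    have hcard : (Set.range (fun a => (g a).1)).ncard = m + 2 := by
      rw [← Set.image_univ, Set.ncard_image_of_injective _ hginj, Set.ncard_univ,
        Nat.card_eq_fintype_card, Fintype.card_fin]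
    have : m + 2 ≤ {V ∈ (𝒱 : Set (Set Z)) | z ∈ V}.ncard := by
      rw [← hcard]
      exact Set.ncard_le_ncard hrange (𝒱.finite_toSet.subset (Set.sep_subset _ _))
    have h2 : {V ∈ (𝒱 : Set (Set Z)) | z ∈ V}.ncard ≤ m + 1 := hVord z
    omega
  -- choose δ
  have hδ : ∃ δ, 0 < δ ∧ ∀ c : {V : Set Z // V ∈ 𝒱} ⊕ (Fin (m + 2) → {V : Set Z // V ∈ 𝒱}),
      (match c with
        | Sum.inl a => Metric.diam (thickening δ (C a)) < 1 / (j + 1)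
        | Sum.inr g => Function.Injective g →
            (⋂ a : Fin (m + 2), thickening δ (C (g a))) = ∅) := by
    apply aux_exists_pos_forall_of_finite
    · rintro (a | g) δ δ' hδ hle hp
      · exact lt_of_le_of_lt
          (Metric.diam_mono (thickening_mono hle _) (aux_isBounded _)) hp
      · intro hg
        have hp' : Function.Injective g → (⋂ a : Fin (m + 2), thickening δ' (C (g a))) = ∅ := hp
        rw [Set.eq_empty_iff_forall_notMem]
        intro y hy
        rw [Set.eq_empty_iff_forall_notMem] at hp'
        exact (hp' hg) y (Set.mem_iInter.mpr fun a =>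
            thickening_mono hle _ (Set.mem_iInter.mp hy a))
    · rintro (a | g)
      · refine ⟨1 / (5 * (j + 1)), hrpos, ?_⟩
        calc Metric.diam (thickening (1 / (5 * (j + 1))) (C a))
            ≤ Metric.diam (C a) + 2 * (1 / (5 * (j + 1))) := diam_thickening_le _ hrpos.le
          _ ≤ 2 / (5 * (j + 1)) + 2 * (1 / (5 * (j + 1))) := by linarith [hCdiam a]
          _ = 4 / (5 * ((j:ℝ) + 1)) := by ring
          _ < 1 / (j + 1) := by
              rw [div_lt_div_iff₀ (by positivity) (by positivity)]
              have hj0 : (0:ℝ) ≤ (j : ℝ) := Nat.cast_nonneg j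
              nlinarith
      · by_cases hg : Function.Injective g
        · obtain ⟨δ, hδpos, hδ⟩ := aux_exists_thickening_iInter_empty
            (fun a : Fin (m + 2) => C (g a)) (fun a => hCcl (g a)) (hIempty g hg)
          exact ⟨δ, hδpos, fun _ => hδ⟩
        · exact ⟨1, one_pos, fun h' => absurd h' hg⟩
  obtain ⟨δ, hδpos, hδ⟩ := hδ
  refine ⟨𝒱.attach.image (fun a => thickening δ (C a)), ?_, ?_, ?_⟩
  · intro O hO
    obtain ⟨a, -, rfl⟩ := Finset.mem_image.mp hO
    exact ⟨isOpen_thickening, hδ (Sum.inl a)⟩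
  · intro x hx
    obtain ⟨a, ha⟩ := Set.mem_iUnion.mp (hwcov (Set.mem_univ (⟨x, hx⟩ : Z)))
    refine ⟨thickening δ (C a), ?_, self_subset_thickening hδpos _ ⟨⟨x, hx⟩, subset_closure ha, rfl⟩⟩
    exact_mod_cast Finset.mem_image_of_mem _ (Finset.mem_attach _ a)
  · intro y
    set A : Set {V : Set Z // V ∈ 𝒱} := {a | y ∈ thickening δ (C a)} with hA
    have hsub : {O ∈ ((𝒱.attach.image (fun a => thickening δ (C a))) : Set (Set Y)) | y ∈ O} ⊆
        (fun a => thickening δ (C a)) '' A := by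
      rintro O ⟨hO, hyO⟩
      obtain ⟨a, -, rfl⟩ := Finset.mem_image.mp (by exact_mod_cast hO)
      exact ⟨a, hyO, rfl⟩
    have hncard : {O ∈ ((𝒱.attach.image (fun a => thickening δ (C a))) : Set (Set Y)) | y ∈ O}.ncard
        ≤ A.ncard :=
      le_trans (Set.ncard_le_ncard hsub ((Set.toFinite A).image _)) (Set.ncard_image_le (Set.toFinite A))
    have hAcard : A.ncard ≤ m + 1 := by
      by_contra hcon
      push_neg at hcon
      have hm2 : m + 2 ≤ (A.toFinite.toFinset).card := by
        have hcard := (Set.ncard_eq_toFinset_card A A.toFinite)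
        omega
      obtain ⟨u, hu_sub, hu_card⟩ := Finset.exists_subset_card_eq hm2
      let g : Fin (m + 2) → {V : Set Z // V ∈ 𝒱} :=
        fun a => (u.equivFin.symm ⟨a.1, by rw [hu_card]; exact a.2⟩).1
      have hginj : Function.Injective g := by
        intro a b hab
        have h1 := u.equivFin.symm.injective (Subtype.ext hab)
        have h2 := congrArg (fun x : Fin u.card => x.1) h1
        exact Fin.ext h2
      have hgA : ∀ a, g a ∈ A := by
        intro a
        have := hu_sub (u.equivFin.symm ⟨a.1, by rw [hu_card]; exact a.2⟩).2
        exact (Set.Finite.mem_toFinset _).mp this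
      have hempty := hδ (Sum.inr g) hginj
      rw [Set.eq_empty_iff_forall_notMem] at hempty
      exact hempty y (Set.mem_iInter.mpr fun a => hgA a)
    exact le_trans hncard hAcard

end Dim2

section Conn
variable {Y : Type} [MetricSpace Y] [CompactSpace Y]

lemma aux_isClosed_connected : IsClosed {K : Hyper Y | IsConnected (K : Set Y)} := by
  rw [← isOpen_compl_iff, Metric.isOpen_iff]
  intro K hK
  simp only [Set.mem_compl_iff, Set.mem_setOf_eq] at hK
  have hpre : ¬ IsPreconnected (K : Set Y) := fun h => hK ⟨K.nonempty, h⟩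
  rw [IsPreconnected] at hpre
  push_neg at hpre
  obtain ⟨U, V, hU, hV, hKUV, hKU, hKV, hdisj⟩ := hpre
  set A : Set Y := (K : Set Y) \ V with hA
  set B : Set Y := (K : Set Y) \ U with hB
  have hAcomp : IsCompact A := K.isCompact.diff hV
  have hBcomp : IsCompact B := K.isCompact.diff hU
  have hABdisj : Disjoint A B := by
    rw [Set.disjoint_iff_inter_eq_empty]
    rw [Set.eq_empty_iff_forall_notMem]
    rintro x ⟨⟨hxK, hxV⟩, ⟨-, hxU⟩⟩
    rcases hKUV hxK with h | h
    · exact hxU h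
    · exact hxV h
  have hABun : A ∪ B = (K : Set Y) := by
    apply Set.Subset.antisymm
    · rintro x (⟨hx, -⟩ | ⟨hx, -⟩) <;> exact hx
    · intro x hx
      by_cases hxV : x ∈ V
      · refine Or.inr ⟨hx, fun hxU => ?_⟩
        exact (Set.eq_empty_iff_forall_notMem.mp hdisj x) ⟨hx, hxU, hxV⟩
      · exact Or.inl ⟨hx, hxV⟩
  have hAne : A.Nonempty := by
    obtain ⟨x, hxK, hxU⟩ := hKU
    refine ⟨x, hxK, fun hxV => ?_⟩
    exact (Set.eq_empty_iff_forall_notMem.mp hdisj x) ⟨hxK, hxU, hxV⟩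
  have hBne : B.Nonempty := by
    obtain ⟨x, hxK, hxV⟩ := hKV
    refine ⟨x, hxK, fun hxU => ?_⟩
    exact (Set.eq_empty_iff_forall_notMem.mp hdisj x) ⟨hxK, hxU, hxV⟩
  obtain ⟨δ, hδpos, hδ⟩ := hABdisj.exists_thickenings hAcomp hBcomp.isClosed
  refine ⟨δ, hδpos, fun K' hK' => ?_⟩
  have hd : dist K' K < δ := by rwa [Metric.mem_ball] at hK'
  simp only [Set.mem_compl_iff, Set.mem_setOf_eq]
  rintro ⟨-, hconn⟩
  have hsub : (K' : Set Y) ⊆ thickening δ A ∪ thickening δ B := by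
    intro x hx
    have : x ∈ thickening δ (K : Set Y) := aux_subset_thickening_of_dist_lt hd hx
    rwa [← hABun, thickening_union] at this
  have hne1 : ((K' : Set Y) ∩ thickening δ A).Nonempty := by
    obtain ⟨a, ha⟩ := hAne
    obtain ⟨x, hxK', hxd⟩ := aux_exists_near_of_dist_lt hd (hABun ▸ Set.mem_union_left _ ha)
    exact ⟨x, hxK', mem_thickening_iff.mpr ⟨a, ha, hxd⟩⟩
  have hne2 : ((K' : Set Y) ∩ thickening δ B).Nonempty := by
    obtain ⟨b, hb⟩ := hBne
    obtain ⟨x, hxK', hxd⟩ := aux_exists_near_of_dist_lt hd (hABun ▸ Set.mem_union_right _ hb)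
    exact ⟨x, hxK', mem_thickening_iff.mpr ⟨b, hb, hxd⟩⟩
  obtain ⟨x, -, hx⟩ := hconn (thickening δ A) (thickening δ B)
    isOpen_thickening isOpen_thickening hsub hne1 hne2
  exact Set.disjoint_iff.mp hδ hx

end Conn

section Assembly
open MeasureTheory
variable {Y : Type} [MetricSpace Y] [CompactSpace Y]

lemma aux_analytic_notC :
    AnalyticSet {K : Hyper Y | ¬ IsCSpace ↥(K : Set Y)} := by
  borelize (Hyper Y × (ℕ → ℝ))
  have hB : MeasurableSet {p : Hyper Y × (ℕ → ℝ) |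
      (∀ i, 0 < p.2 i) ∧ ∀ k, ¬ GoodAt p.1 p.2 k} := by
    have heq : {p : Hyper Y × (ℕ → ℝ) | (∀ i, 0 < p.2 i) ∧ ∀ k, ¬ GoodAt p.1 p.2 k}
        = (⋂ i, {p : Hyper Y × (ℕ → ℝ) | 0 < p.2 i}) ∩
          (⋂ k, {p : Hyper Y × (ℕ → ℝ) | GoodAt p.1 p.2 k}ᶜ) := by
      ext p
      simp only [Set.mem_setOf_eq, Set.mem_inter_iff, Set.mem_iInter, Set.mem_compl_iff]
    rw [heq]
    refine MeasurableSet.inter (MeasurableSet.iInter fun i => ?_)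
      (MeasurableSet.iInter fun k => ?_)
    · exact (isOpen_lt continuous_const ((continuous_apply i).comp continuous_snd)).measurableSet
    · exact (isOpen_goodAt k).isClosed_compl.measurableSet
  have himg := (hB.analyticSet).image_of_continuous continuous_fst
  have heq2 : {K : Hyper Y | ¬ IsCSpace ↥(K : Set Y)} =
      Prod.fst '' {p : Hyper Y × (ℕ → ℝ) | (∀ i, 0 < p.2 i) ∧ ∀ k, ¬ GoodAt p.1 p.2 k} := by
    ext K
    simp only [Set.mem_setOf_eq, Set.mem_image]
    constructor
    · intro hK
      rw [isCSpace_iff_goodAt] at hK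
      push_neg at hK
      obtain ⟨ε, hε, hk⟩ := hK
      exact ⟨(K, ε), ⟨hε, hk⟩, rfl⟩
    · rintro ⟨⟨K', ε⟩, ⟨hε, hk⟩, rfl⟩
      rw [isCSpace_iff_goodAt]
      push_neg
      exact ⟨ε, hε, hk⟩
  rw [heq2]
  exact himg

lemma aux_analytic_dim (m : ℕ) :
    AnalyticSet {K : Hyper Y | CovDimLE ↥(K : Set Y) m} := by
  borelize (Hyper Y)
  have heq : {K : Hyper Y | CovDimLE ↥(K : Set Y) m} = ⋂ j, {K : Hyper Y | DimWitness m j K} := by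
    ext K
    simp only [Set.mem_setOf_eq, Set.mem_iInter]
    exact ⟨fun h j => dimWitness_of_covDimLE m K h j, fun h => covDimLE_of_dimWitness m K h⟩
  rw [heq]
  exact (MeasurableSet.iInter fun j => (isOpen_dimWitness m j).measurableSet).analyticSet

lemma aux_analytic_cfam_compl (n : ℕ) : AnalyticSet ((CFam Y n)ᶜ) := by
  have hcompl : (CFam Y n)ᶜ = {K : Hyper Y | ¬ IsCSpace ↥(K : Set Y)} ∪
      ⋃ m, {K : Hyper Y | m + 1 ≤ n ∧ CovDimLE ↥(K : Set Y) m} := by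
    ext K
    simp only [CFam, Set.mem_compl_iff, Set.mem_setOf_eq, Set.mem_union, Set.mem_iUnion]
    rw [not_and_or]
    have hdim : (¬ CovDimGE ↥(K : Set Y) n) ↔
        ∃ m, m + 1 ≤ n ∧ CovDimLE ↥(K : Set Y) m := by
      unfold CovDimGE
      push_neg
      rfl
    rw [hdim]
  rw [hcompl, Set.union_eq_iUnion]
  refine AnalyticSet.iUnion fun b => ?_
  cases b with
  | true => exact aux_analytic_notC
  | false =>
  refine AnalyticSet.iUnion fun m => ?_
  by_cases hm : m + 1 ≤ n
  · have : {K : Hyper Y | m + 1 ≤ n ∧ CovDimLE ↥(K : Set Y) m}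
        = {K : Hyper Y | CovDimLE ↥(K : Set Y) m} := by
      ext K; simp [hm]
    rw [this]
    exact aux_analytic_dim m
  · have : {K : Hyper Y | m + 1 ≤ n ∧ CovDimLE ↥(K : Set Y) m} = (∅ : Set (Hyper Y)) := by
      ext K; simp [hm]
    rw [this]
    exact analyticSet_empty

end Assembly
/-- For every compact metric space `Y` and every `n ≥ 0`, the family
`C_n(Y)` of all compacta in `Y` of covering dimension `≥ n` that are `C`-spaces is a
coanalytic subset of `2^Y`, and `C_n(Y) ∩ C(Y)` is a coanalytic subset of `C(Y)`. -/
theorem statement15 (Y : Type) [MetricSpace Y] [CompactSpace Y] (n : ℕ) :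
    IsCoanalytic (CFam Y n) ∧
    IsCoanalytic {K : Subcontinua Y | K.1 ∈ CFam Y n} := by
  classical
  have h1 : MeasureTheory.AnalyticSet ((CFam Y n)ᶜ) := aux_analytic_cfam_compl n
  refine ⟨h1, ?_⟩
  haveI : PolishSpace (Subcontinua Y) :=
    (aux_isClosed_connected (Y := Y)).polishSpace
  have heq : ({K : Subcontinua Y | K.1 ∈ CFam Y n})ᶜ =
      (fun K : Subcontinua Y => K.1) ⁻¹' ((CFam Y n)ᶜ) := rfl
  show MeasureTheory.AnalyticSet (({K : Subcontinua Y | K.1 ∈ CFam Y n})ᶜ)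
  rw [heq]
  exact MeasureTheory.AnalyticSet.preimage h1 continuous_subtype_val
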